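/- Let {ρ_i}_{i∈ℤ^d} satisfy hypothesis (H1), assume λ^i(E) = 1 for every i, and let μ be a probability measure on (Ω,𝓕) such that (μ λ_j)(B(j,V)^c) = 0 for every finite V ⊆ ℤ^d and j ∉ V. Then for every finite V ⊆ ℤ^d and every k ∈ V, (μ λ_V)(B(k,V∖{k})^c) = 0. -/

import Mathlib

open MeasureTheory ProbabilityTheory
open scoped ENNReal NNReal

namespace GibbsSingleton

/-- Configuration space `E^ι`. -/
abbrev Config (ι E : Type*) := ι → E

variable {ι E : Type*}

/-- The configuration equal to `σ` on `Λ` and to `ω` off `Λ`. -/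
def subst [DecidableEq ι] (Λ : Finset ι) (σ : {x // x ∈ Λ} → E) (ω : Config ι E) :
    Config ι E := fun i => if h : i ∈ Λ then σ ⟨i, h⟩ else ω i

variable [MeasurableSpace E]

/-- The free kernel `λ_Λ` applied to an `ℝ≥0∞`-valued function:
`λ_Λ(h ∣ ω) = ∫ h(σ_Λ ω) λ^Λ(dσ_Λ)`. -/
noncomputable def freeF [DecidableEq ι] (lam : ι → Measure E) (Λ : Finset ι)
    (h : Config ι E → ℝ≥0∞) (ω : Config ι E) : ℝ≥0∞ :=
  ∫⁻ σ : {x // x ∈ Λ} → E, h (subst Λ σ ω) ∂(Measure.pi fun i : {x // x ∈ Λ} => lam i.1)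

/-- The function `ρ_i ρ_j⁻¹`, `ℝ≥0∞`-valued. -/
noncomputable def rat (ρ : ι → Config ι E → ℝ≥0) (i j : ι) (η : Config ι E) : ℝ≥0∞ :=
  (ρ i η : ℝ≥0∞) / (ρ j η : ℝ≥0∞)

/-- The set `b(j,V,ω)` of good configurations at site `j` given `ω` outside `V ∪ {j}`. -/
noncomputable def bSet [DecidableEq ι] (lam : ι → Measure E) (ρ : ι → Config ι E → ℝ≥0)
    (j : ι) (V : Finset ι) (ω : Config ι E) : Set E :=
  {x | (∀ σ : {y // y ∈ V} → E, 0 < ρ j (subst V σ (Function.update ω j x))) ∧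
    ∀ i, i ≠ j →
      0 < (⨅ σ : {y // y ∈ V} → E,
          freeF lam {i} (rat ρ i j) (subst V σ (Function.update ω j x))) ∧
      (⨆ σ : {y // y ∈ V} → E,
          freeF lam {i} (rat ρ i j) (subst V σ (Function.update ω j x))) < ⊤}

/-- The multi-site good set `b(V,W,ω)`. -/
noncomputable def bSetF [DecidableEq ι] (lam : ι → Measure E) (ρ : ι → Config ι E → ℝ≥0)
    (V W : Finset ι) (ω : Config ι E) : Set ({x // x ∈ V} → E) :=
  {xV | ∀ k : {x // x ∈ V}, xV k ∈ bSet lam ρ k.1 ((V.erase k.1) ∪ W) ω}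

/-- The set `B(j,V) = {ω : ω_j ∈ b(j,V,ω)}`. -/
noncomputable def BSet [DecidableEq ι] (lam : ι → Measure E) (ρ : ι → Config ι E → ℝ≥0)
    (j : ι) (V : Finset ι) : Set (Config ι E) :=
  {ω | ω j ∈ bSet lam ρ j V ω}

/-- Hypothesis (H1): every good set `b(j,V,ω)` is nonempty. -/
def H1 [DecidableEq ι] (lam : ι → Measure E) (ρ : ι → Config ι E → ℝ≥0) : Prop :=
  ∀ (ω : Config ι E) (j : ι) (V : Finset ι), j ∉ V → (bSet lam ρ j V ω).Nonempty

/-- The order-consistency identity appearing in hypothesis (H2), with the convention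
`1/∞ = 0` built into `ℝ≥0∞` division. -/
def H2id [DecidableEq ι] (lam : ι → Measure E) (ρ : ι → Config ι E → ℝ≥0)
    (i j : ι) (ω : Config ι E) : Prop :=
  ∀ xi ∈ bSet lam ρ i {j} ω, ∀ xj ∈ bSet lam ρ j {i} ω,
    ((ρ i ω : ℝ≥0∞) * (ρ j (Function.update ω i xi) : ℝ≥0∞)) /
      ((ρ i (Function.update ω i xi) : ℝ≥0∞) *
        freeF lam {j} (rat ρ j i) (Function.update ω i xi))
    = ((ρ j ω : ℝ≥0∞) * (ρ i (Function.update ω j xj) : ℝ≥0∞)) /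
      ((ρ j (Function.update ω j xj) : ℝ≥0∞) *
        freeF lam {i} (rat ρ i j) (Function.update ω j xj))

/-- Hypothesis (H2). -/
def H2 [DecidableEq ι] (lam : ι → Measure E) (ρ : ι → Config ι E → ℝ≥0) : Prop :=
  ∀ i j, i ≠ j → ∀ ω : Config ι E, H2id lam ρ i j ω

/-- `R_Θ^Γ` evaluated using the choice `x_Θ`:
`((ρ_Θ/ρ_Γ) ⬝ λ_Γ(ρ_Γ ρ_Θ⁻¹))(x_Θ ω)`. -/
noncomputable def Rexpr [DecidableEq ι] (lam : ι → Measure E)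
    (ρF : Finset ι → Config ι E → ℝ≥0) (Θ Γ : Finset ι) (x : {y // y ∈ Θ} → E)
    (ω : Config ι E) : ℝ≥0∞ :=
  ((ρF Θ (subst Θ x ω) : ℝ≥0∞) / (ρF Γ (subst Θ x ω) : ℝ≥0∞)) *
    freeF lam Γ (fun η => (ρF Γ η : ℝ≥0∞) / (ρF Θ η : ℝ≥0∞)) (subst Θ x ω)

/-- The family `ρ_Λ` is obtained from the singletons `ρ_i` by the recursive construction
`ρ_{Λ∪{i}} = ρ_Λ / R_Λ^i`, `R_Λ^i(ω) = ((ρ_Λ/ρ_i) ⬝ λ_i(ρ_i ρ_Λ⁻¹))(x_Λ ω)`,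
`x_Λ ∈ b(Λ,{i},ω)` (the value being independent of this choice). -/
def IsRec [DecidableEq ι] (lam : ι → Measure E) (ρ : ι → Config ι E → ℝ≥0)
    (ρF : Finset ι → Config ι E → ℝ≥0) : Prop :=
  (∀ ω, ρF ∅ ω = 1) ∧ (∀ i, ρF {i} = ρ i) ∧ (∀ Λ, Measurable (ρF Λ)) ∧
  ∀ (Λ : Finset ι) (i : ι), i ∉ Λ → ∀ ω : Config ι E,
    (∀ x ∈ bSetF lam ρ Λ {i} ω, ∀ x' ∈ bSetF lam ρ Λ {i} ω,
      Rexpr lam ρF Λ {i} x ω = Rexpr lam ρF Λ {i} x' ω) ∧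
    ∀ x ∈ bSetF lam ρ Λ {i} ω,
      (ρF (insert i Λ) ω : ℝ≥0∞) = (ρF Λ ω : ℝ≥0∞) / Rexpr lam ρF Λ {i} x ω

/-- The sub-σ-algebra `𝓕_U` of events generated by the coordinates in `U`. -/
def cylSigma (E : Type*) [MeasurableSpace E] {ι : Type*} (U : Set ι) :
    MeasurableSpace (Config ι E) :=
  MeasurableSpace.comap (fun ω (i : U) => ω i.1) MeasurableSpace.pi

/-- A specification: a family of probability kernels, measurable w.r.t. the outside
σ-algebra, proper, and consistent. -/
def IsSpecification (γ : Finset ι → Kernel (Config ι E) (Config ι E)) : Prop :=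
  (∀ Λ, IsMarkovKernel (γ Λ)) ∧
  (∀ (Λ : Finset ι) (A : Set (Config ι E)), MeasurableSet A →
    Measurable[cylSigma E ((Λ : Set ι)ᶜ)] fun ω => γ Λ ω A) ∧
  (∀ (Λ : Finset ι) (B : Set (Config ι E)), MeasurableSet[cylSigma E ((Λ : Set ι)ᶜ)] B →
    ∀ ω, γ Λ ω B = B.indicator (fun _ => (1 : ℝ≥0∞)) ω) ∧
  (∀ Λ Δ : Finset ι, Λ ⊆ Δ → (γ Λ).comp (γ Δ) = γ Δ)

/-- The kernel family `γ` is `{ρ_Λ λ_Λ}`. -/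
def MatchesDensity [DecidableEq ι] (lam : ι → Measure E)
    (γ : Finset ι → Kernel (Config ι E) (Config ι E))
    (ρF : Finset ι → Config ι E → ℝ≥0) : Prop :=
  ∀ (Λ : Finset ι) (ω : Config ι E) (A : Set (Config ι E)), MeasurableSet A →
    γ Λ ω A = freeF lam Λ (fun η => (ρF Λ η : ℝ≥0∞) * A.indicator (fun _ => 1) η) ω

end GibbsSingleton

open GibbsSingleton MeasureTheory ProbabilityTheory

section Aux

open MeasureTheory

variable {ι E : Type*} [MeasurableSpace E] [DecidableEq ι]

lemma GibbsSingleton.subst_eq_updateFinset (Λ : Finset ι) (σ : {x // x ∈ Λ} → E)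
    (ω : Config ι E) : subst Λ σ ω = Function.updateFinset ω Λ σ := rfl

lemma GibbsSingleton.bSet_congr (lam : ι → Measure E) (ρ : ι → Config ι E → ℝ≥0)
    (j : ι) (W : Finset ι) {η η' : Config ι E}
    (h : ∀ i, i ≠ j → i ∉ W → η i = η' i) :
    bSet lam ρ j W η = bSet lam ρ j W η' := by
  have key : ∀ (x : E) (σ : {y // y ∈ W} → E),
      subst W σ (Function.update η j x) = subst W σ (Function.update η' j x) := by
    intro x σ; funext i
    by_cases hiW : i ∈ W
    · simp [subst, hiW]
    · by_cases hij : i = j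
      · subst hij; simp [subst, hiW]
      · simp [subst, hiW, Function.update_of_ne hij, h i hij hiW]
  unfold bSet
  ext x
  simp only [Set.mem_setOf_eq, key]

lemma lintegral_fst_prod_le {α β : Type*} [MeasurableSpace α] [MeasurableSpace β]
    (μ : Measure α) [SFinite μ] (ν : Measure β) [IsProbabilityMeasure ν]
    (G : α → ℝ≥0∞) :
    ∫⁻ p, G p.1 ∂(μ.prod ν) ≤ ∫⁻ x, G x ∂μ := by
  obtain ⟨g, hgm, hgle, hint⟩ := exists_measurable_le_lintegral_eq (μ.prod ν)
    (fun p : α × β => G p.1)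
  rw [hint, lintegral_prod _ hgm.aemeasurable]
  refine lintegral_mono fun x => ?_
  calc ∫⁻ y, g (x, y) ∂ν ≤ ∫⁻ _, G x ∂ν := lintegral_mono fun y => hgle (x, y)
    _ = G x := by simp

lemma GibbsSingleton.freeF_union_le (lam : ι → Measure E) [∀ i, IsProbabilityMeasure (lam i)]
    {k : ι} {W : Finset ι} (hkW : k ∉ W) (f : Config ι E → ℝ≥0∞)
    (hf : ∀ (z : {y // y ∈ W} → E) (η : Config ι E), f (subst W z η) = f η)
    (ω : Config ι E) :
    freeF lam ({k} ∪ W) f ω ≤ freeF lam {k} f ω := by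
  have hdisj : Disjoint ({k} : Finset ι) W := by
    simpa [Finset.disjoint_singleton_left] using hkW
  have hrw : ∀ p : ({x // x ∈ ({k} : Finset ι)} → E) × ({x // x ∈ W} → E),
      f (subst ({k} ∪ W) (MeasurableEquiv.piFinsetUnion (fun _ => E) hdisj p) ω)
        = f (subst {k} p.1 ω) := by
    intro p
    have heq : subst ({k} ∪ W) (MeasurableEquiv.piFinsetUnion (fun _ => E) hdisj p) ω
        = subst W p.2 (subst {k} p.1 ω) := by
      rw [subst_eq_updateFinset, subst_eq_updateFinset, subst_eq_updateFinset,
        Function.updateFinset_updateFinset hdisj]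
      rfl
    rw [heq, hf]
  calc freeF lam ({k} ∪ W) f ω
      = ∫⁻ p, f (subst ({k} ∪ W) (MeasurableEquiv.piFinsetUnion (fun _ => E) hdisj p) ω)
          ∂((Measure.pi fun i : {x // x ∈ ({k} : Finset ι)} => lam i.1).prod
            (Measure.pi fun i : {x // x ∈ W} => lam i.1)) :=
        (measurePreserving_piFinsetUnion hdisj lam).lintegral_map_equiv _ _
    _ = ∫⁻ p : ({x // x ∈ ({k} : Finset ι)} → E) × ({x // x ∈ W} → E),
          f (subst {k} p.1 ω)
          ∂((Measure.pi fun i : {x // x ∈ ({k} : Finset ι)} => lam i.1).prod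
            (Measure.pi fun i : {x // x ∈ W} => lam i.1)) := by simp_rw [hrw]
    _ ≤ freeF lam {k} f ω := lintegral_fst_prod_le _ _ _

end Aux


/-- **Lemma 3 (3)(a).**  If `μ ∈ 𝒩`, i.e. `(μ λ_j)(B(j,V)ᶜ) = 0` for all finite `V`
and `j ∉ V`, then `(μ λ_V)(B(k,V∖{k})ᶜ) = 0` for every finite `V` and `k ∈ V`. -/
theorem muFree_null_of_class_N
    {d : ℕ} (hd : 0 < d) {E : Type*} [MeasurableSpace E]
    (lam : (Fin d → ℤ) → Measure E) [∀ i, IsProbabilityMeasure (lam i)]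
    (ρ : (Fin d → ℤ) → Config (Fin d → ℤ) E → ℝ≥0)
    (hmeas : ∀ i, Measurable (ρ i))
    (h1 : H1 lam ρ)
    (μ : Measure (Config (Fin d → ℤ) E)) [IsProbabilityMeasure μ]
    (hN : ∀ (V : Finset (Fin d → ℤ)) (j : Fin d → ℤ), j ∉ V →
      ∫⁻ ω, freeF lam {j} ((BSet lam ρ j V)ᶜ.indicator fun _ => 1) ω ∂μ = 0) :
    ∀ (V : Finset (Fin d → ℤ)) (k : Fin d → ℤ), k ∈ V →
      ∫⁻ ω, freeF lam V ((BSet lam ρ k (V.erase k))ᶜ.indicator fun _ => 1) ω ∂μ = 0 := by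
  intro V k hkV
  obtain ⟨W, hkW, rfl⟩ : ∃ W : Finset (Fin d → ℤ), k ∉ W ∧ V = {k} ∪ W :=
    ⟨V.erase k, Finset.notMem_erase k V, by
      rw [← Finset.insert_eq, Finset.insert_erase hkV]⟩
  have herase : ({k} ∪ W).erase k = W := by
    rw [Finset.erase_union_distrib, Finset.erase_singleton,
      Finset.erase_eq_of_notMem hkW, Finset.empty_union]
  rw [herase]
  set f := ((BSet lam ρ k W)ᶜ.indicator fun _ => (1 : ℝ≥0∞)) with hfdef
  have hf : ∀ (z : {y // y ∈ W} → E) (η : Config (Fin d → ℤ) E),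
      f (subst W z η) = f η := by
    intro z η
    have h1 : (subst W z η) k = η k := by simp [subst, hkW]
    have h2 : bSet lam ρ k W (subst W z η) = bSet lam ρ k W η :=
      bSet_congr lam ρ k W (fun i hij hiW => by simp [subst, hiW])
    have hmem : subst W z η ∈ BSet lam ρ k W ↔ η ∈ BSet lam ρ k W := by
      simp only [BSet, Set.mem_setOf_eq, h1, h2]
    simp only [hfdef]
    by_cases hb : η ∈ BSet lam ρ k W
    · rw [Set.indicator_of_notMem (Set.notMem_compl_iff.mpr (hmem.mpr hb)),
        Set.indicator_of_notMem (Set.notMem_compl_iff.mpr hb)]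
    · rw [Set.indicator_of_mem (Set.mem_compl fun hc => hb (hmem.mp hc)),
        Set.indicator_of_mem (Set.mem_compl hb)]
  refine le_antisymm ?_ zero_le
  calc ∫⁻ ω, freeF lam ({k} ∪ W) f ω ∂μ
      ≤ ∫⁻ ω, freeF lam {k} f ω ∂μ :=
        lintegral_mono fun ω => freeF_union_le lam hkW f hf ω
    _ = 0 := hN W k hkW
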